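/- Let Θ ⊆ ℝ^m be a closed rectangle and F: Θ → ℝ^m a continuously differentiable map whose Jacobian matrix ∇F(θ) is a P-matrix (all principal minors positive) at every θ ∈ Θ. Then F is injective on Θ. -/

import Mathlib

open Matrix Set

/-- All principal minors (including the empty one) of `N` are positive. -/
def PosMinors {n : Type*} [Fintype n] [DecidableEq n] (N : Matrix n n ℝ) : Prop :=
  ∀ s : Finset n, 0 < (N.submatrix (fun i : s => (i : n)) (fun j : s => (j : n))).det

section MatrixLemmas

variable {n : Type*} [Fintype n] [DecidableEq n]

/-- det of a matrix whose rows off `s` are standard basis vectors. -/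
lemma det_rows_single (B : Matrix n n ℝ) (s : Finset n) :
    (Matrix.of (fun i j => if i ∈ s then B i j else (if i = j then (1:ℝ) else 0))).det
      = (B.submatrix (fun i : s => (i : n)) (fun j : s => (j : n))).det := by
  classical
  set N : Matrix n n ℝ :=
    Matrix.of (fun i j => if i ∈ s then B i j else (if i = j then (1:ℝ) else 0)) with hN
  let e : {x // x ∈ s} ⊕ {x // x ∉ s} ≃ n := Equiv.sumCompl (fun x => x ∈ s)
  have h1 : (N.submatrix e e).det = N.det := Matrix.det_submatrix_equiv_self e N
  have h2 : N.submatrix e e =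
      Matrix.fromBlocks (B.submatrix (fun i : s => (i : n)) (fun j : s => (j : n)))
        (B.submatrix (fun i : s => (i : n)) (fun j : {x // x ∉ s} => (j : n))) 0 1 := by
    ext i j
    cases i with
    | inl i =>
      cases j with
      | inl j => simp [N, e, i.2]
      | inr j => simp [N, e, i.2]
    | inr i =>
      cases j with
      | inl j =>
        have : (i : n) ≠ (j : n) := by
          intro h; exact i.2 (h ▸ j.2)
        simp [N, e, i.2, this]
      | inr j =>
        by_cases h : (i : n) = (j : n)
        · have hij : i = j := Subtype.ext h
          simp [N, e, hij, j.2, Matrix.one_apply]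
        · have : i ≠ j := fun hc => h (congrArg _ hc)
          simp [N, e, i.2, h, Matrix.one_apply, this]
  rw [h2] at h1
  rw [Matrix.det_fromBlocks_zero₂₁, Matrix.det_one, mul_one] at h1
  exact h1.symm

/-- Expansion: `det (B + diagonal d)` is positive when all principal minors of `B`
are positive and `d` is nonnegative. -/
lemma det_add_diagonal_pos {B : Matrix n n ℝ} (hB : PosMinors B)
    {d : n → ℝ} (hd : ∀ i, 0 ≤ d i) : 0 < (B + Matrix.diagonal d).det := by
  classical
  have hexp : (B + Matrix.diagonal d).det
      = ∑ s : Finset n, ((∏ i ∈ sᶜ, d i) *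
          (B.submatrix (fun i : s => (i : n)) (fun j : s => (j : n))).det) := by
    have h0 : (B + Matrix.diagonal d).det
        = (Matrix.detRowAlternating : (n → ℝ) [⋀^n]→ₗ[ℝ] ℝ).toMultilinearMap
            ((B : n → n → ℝ) + (Matrix.diagonal d : n → n → ℝ)) := rfl
    rw [h0]
    erw [MultilinearMap.map_add_univ]
    refine Finset.sum_congr rfl (fun s _ => ?_)
    have hpiece :
        (Matrix.detRowAlternating : (n → ℝ) [⋀^n]→ₗ[ℝ] ℝ).toMultilinearMap
          (s.piecewise (B : n → n → ℝ) (Matrix.diagonal d : n → n → ℝ))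
        = (Matrix.of (fun i j => (if i ∈ s then (1:ℝ) else d i) *
            (Matrix.of (fun i' j' => if i' ∈ s then B i' j'
              else (if i' = j' then (1:ℝ) else 0)) i j))).det := by
      have harg : s.piecewise (B : n → n → ℝ) (Matrix.diagonal d : n → n → ℝ)
          = fun i j => (if i ∈ s then (1:ℝ) else d i) *
              (Matrix.of (fun i' j' => if i' ∈ s then B i' j'
                else (if i' = j' then (1:ℝ) else 0)) i j) := by
        funext i j
        by_cases hi : i ∈ s
        · simp [Finset.piecewise, hi]
        · simp [Finset.piecewise, hi, Matrix.diagonal, Matrix.of_apply]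
      rw [harg]
      rfl
    rw [hpiece, Matrix.det_mul_column, det_rows_single]
    congr 1
    calc ∏ i, (if i ∈ s then (1:ℝ) else d i)
        = (∏ i ∈ s, (if i ∈ s then (1:ℝ) else d i)) *
            ∏ i ∈ sᶜ, (if i ∈ s then (1:ℝ) else d i) :=
          (Finset.prod_mul_prod_compl s _).symm
      _ = 1 * ∏ i ∈ sᶜ, d i := by
          rw [Finset.prod_eq_one (fun i hi => if_pos hi),
            Finset.prod_congr rfl (fun i hi => if_neg (Finset.mem_compl.mp hi))]
      _ = ∏ i ∈ sᶜ, d i := one_mul _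
  have hpos : ∀ s : Finset n,
      0 ≤ (∏ i ∈ sᶜ, d i) *
          (B.submatrix (fun i : s => (i : n)) (fun j : s => (j : n))).det :=
    fun s => mul_nonneg (Finset.prod_nonneg (fun i _ => hd i)) (le_of_lt (hB s))
  rw [hexp]
  have : 0 < (∏ i ∈ (Finset.univ : Finset n)ᶜ, d i) *
      (B.submatrix (fun i : (Finset.univ : Finset n) => (i : n))
        (fun j : (Finset.univ : Finset n) => (j : n))).det := by
    rw [Finset.compl_univ, Finset.prod_empty, one_mul]
    exact hB Finset.univ
  exact Finset.sum_pos' (fun s _ => hpos s) ⟨Finset.univ, Finset.mem_univ _, this⟩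


lemma posMinors_submatrix {N : Matrix n n ℝ} (hN : PosMinors N) (t : Finset n) :
    PosMinors (N.submatrix (fun i : t => (i : n)) (fun j : t => (j : n))) := by
  classical
  intro r
  let r' : Finset n := r.map ⟨fun i : t => (i : n), Subtype.coe_injective⟩
  have hmem : ∀ i : r, ((i : t) : n) ∈ r' :=
    fun i => Finset.mem_map.mpr ⟨(i : t), i.2, rfl⟩
  let f : r → r' := fun i => ⟨((i : t) : n), hmem i⟩
  have hbij : Function.Bijective f := by
    constructor
    · intro a b hab
      have h2 := congrArg Subtype.val hab
      exact Subtype.ext (Subtype.ext h2)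
    · rintro ⟨a, ha⟩
      obtain ⟨b, hb, hba⟩ := Finset.mem_map.mp ha
      exact ⟨⟨b, hb⟩, Subtype.ext hba⟩
  let e : r ≃ r' := Equiv.ofBijective f hbij
  have key : ((N.submatrix (fun i : t => (i : n)) (fun j : t => (j : n))).submatrix
        (fun i : r => (i : t)) (fun j : r => (j : t)))
      = (N.submatrix (fun i : r' => (i : n)) (fun j : r' => (j : n))).submatrix e e := by
    ext i j; rfl
  rw [key, Matrix.det_submatrix_equiv_self]
  exact hN r'

lemma posMinors_transpose {N : Matrix n n ℝ} (hN : PosMinors N) :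
    PosMinors Nᵀ := by
  intro s
  have : (Nᵀ.submatrix (fun i : s => (i : n)) (fun j : s => (j : n)))
      = (N.submatrix (fun i : s => (i : n)) (fun j : s => (j : n)))ᵀ := by
    ext i j; rfl
  rw [this, Matrix.det_transpose]
  exact hN s

lemma posMinors_no_sign_reversal {N : Matrix n n ℝ} (hN : PosMinors N)
    {q : n → ℝ} (hq0 : ∀ i, 0 ≤ q i) (hqne : q ≠ 0)
    (hle : ∀ i, N.mulVec q i ≤ 0) : False := by
  classical
  let t : Finset n := Finset.univ.filter (fun i => q i ≠ 0)
  let B := N.submatrix (fun i : t => (i : n)) (fun j : t => (j : n))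
  let w : t → ℝ := fun j => q (j : n)
  have hw : ∀ j : t, 0 < w j := by
    intro j
    have := (Finset.mem_filter.mp j.2).2
    exact lt_of_le_of_ne (hq0 _) (Ne.symm this)
  have hqz : ∀ j, j ∉ t → q j = 0 := by
    intro j hj
    by_contra h
    exact hj (Finset.mem_filter.mpr ⟨Finset.mem_univ _, h⟩)
  have hBw : ∀ i : t, B.mulVec w i = N.mulVec q (i : n) := by
    intro i
    show ∑ j : t, N (i : n) (j : n) * q (j : n) = ∑ j, N (i : n) j * q j
    rw [Finset.sum_coe_sort t (fun j => N (i : n) j * q j)]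
    exact Finset.sum_subset (Finset.subset_univ t)
      (fun j _ hj => by rw [hqz j hj, mul_zero])
  let d : t → ℝ := fun i => -(B.mulVec w i) / w i
  have hd : ∀ i, 0 ≤ d i := fun i =>
    div_nonneg (neg_nonneg.mpr ((hBw i) ▸ hle (i : n))) (le_of_lt (hw i))
  have hker : (B + Matrix.diagonal d).mulVec w = 0 := by
    funext i
    have hwne : w i ≠ 0 := ne_of_gt (hw i)
    have h1 : (Matrix.diagonal d).mulVec w i = d i * w i := by
      simp [Matrix.mulVec_diagonal]
    have h2 : d i * w i = -(B.mulVec w i) := by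
      show -(B.mulVec w i) / w i * w i = _
      exact div_mul_cancel₀ _ hwne
    rw [Matrix.add_mulVec, Pi.add_apply, h1, h2]
    simp
  obtain ⟨i0, hi0⟩ := Function.ne_iff.mp hqne
  have hi0t : i0 ∈ t := Finset.mem_filter.mpr ⟨Finset.mem_univ _, hi0⟩
  have hwne : w ≠ 0 := by
    intro h
    apply hi0
    have : w ⟨i0, hi0t⟩ = 0 := by rw [h]; rfl
    exact this
  have hdet0 : (B + Matrix.diagonal d).det = 0 :=
    Matrix.exists_mulVec_eq_zero_iff.mp ⟨w, hwne, hker⟩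
  have hpos := det_add_diagonal_pos (posMinors_submatrix hN t) hd
  rw [hdet0] at hpos
  exact lt_irrefl 0 hpos

lemma posMinors_exists_pos_mulVec {N : Matrix n n ℝ} (hN : PosMinors N) :
    ∃ u : n → ℝ, (∀ i, 0 ≤ u i) ∧ ∀ i, 0 < N.mulVec u i := by
  classical
  by_contra hcon
  push_neg at hcon
  have hdisj : Disjoint {z : n → ℝ | ∀ i, 0 < z i}
      {z : n → ℝ | ∃ u : n → ℝ, (∀ i, 0 ≤ u i) ∧ N.mulVec u = z} := by
    rw [Set.disjoint_left]
    rintro z hz ⟨u, hu, rfl⟩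
    obtain ⟨i, hi⟩ := hcon u hu
    exact absurd (hz i) (not_lt.mpr hi)
  have hopen : IsOpen {z : n → ℝ | ∀ i, 0 < z i} := by
    have : {z : n → ℝ | ∀ i, 0 < z i} = ⋂ i, {z : n → ℝ | 0 < z i} := by
      ext z; simp
    rw [this]
    exact isOpen_iInter_of_finite
      (fun i => isOpen_lt continuous_const (continuous_apply i))
  have hconv1 : Convex ℝ {z : n → ℝ | ∀ i, 0 < z i} := by
    intro a ha b hb s t hs ht hst
    intro i
    have h1 : (s • a + t • b) i = s * a i + t * b i := by
      simp [Pi.smul_apply, smul_eq_mul]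
    rw [h1]
    rcases eq_or_lt_of_le hs with hs0 | hs0
    · have ht1 : t = 1 := by linarith
      rw [← hs0, ht1]; simpa using hb i
    · exact add_pos_of_pos_of_nonneg (mul_pos hs0 (ha i))
        (mul_nonneg ht (le_of_lt (hb i)))
  have hconv2 : Convex ℝ {z : n → ℝ | ∃ u : n → ℝ, (∀ i, 0 ≤ u i) ∧ N.mulVec u = z} := by
    rintro _ ⟨u, hu, rfl⟩ _ ⟨v, hv, rfl⟩ s t hs ht _
    refine ⟨s • u + t • v, fun i => ?_, ?_⟩
    · have : (s • u + t • v) i = s * u i + t * v i := by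
        simp [Pi.smul_apply, smul_eq_mul]
      rw [this]
      exact add_nonneg (mul_nonneg hs (hu i)) (mul_nonneg ht (hv i))
    · rw [Matrix.mulVec_add, Matrix.mulVec_smul, Matrix.mulVec_smul]
  obtain ⟨f, c, hfo, hfc⟩ := geometric_hahn_banach_open hconv1 hopen hconv2 hdisj
  have hc0 : c ≤ 0 := by
    have := hfc 0 ⟨0, fun i => le_refl 0, Matrix.mulVec_zero N⟩
    simpa using this
  set w : n → ℝ := fun i => f (Pi.single i 1) with hw
  have hrep : ∀ z : n → ℝ, f z = ∑ i, z i * w i := by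
    intro z
    have hz : z = ∑ i, z i • (Pi.single i (1:ℝ) : n → ℝ) := by
      funext j
      simp [Finset.sum_apply, Pi.single_apply]
    conv_lhs => rw [hz]
    rw [map_sum]
    simp [hw, smul_eq_mul]
  have hone : f (fun _ => (1:ℝ)) < 0 := by
    have := hfo (fun _ => (1:ℝ)) (fun i => one_pos)
    linarith
  have hwle : ∀ i, w i ≤ 0 := by
    intro i
    by_contra hwi
    push_neg at hwi
    set τ : ℝ := (1 - f (fun _ => (1:ℝ))) / w i with hτ
    have hτpos : 0 < τ := div_pos (by linarith) hwi
    set a : n → ℝ := fun j => (Pi.single i τ : n → ℝ) j + 1 with ha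
    have hmem : ∀ j, 0 < a j := by
      intro j
      by_cases h : i = j
      · subst h; simp [ha, Pi.single_apply]; linarith
      · simp [ha, Pi.single_apply, Ne.symm h]
    have hlt := hfo a hmem
    have hfa : f a = τ * w i + f (fun _ => (1:ℝ)) := by
      have ha2 : a = τ • (Pi.single i (1:ℝ) : n → ℝ) + (fun _ => (1:ℝ)) := by
        funext j
        by_cases h : i = j
        · subst h; simp [ha, Pi.single_apply]
        · simp [ha, Pi.single_apply, Ne.symm h]
      rw [ha2, map_add, f.map_smul, smul_eq_mul]
    rw [hfa] at hlt
    have hτw : τ * w i = 1 - f (fun _ => (1:ℝ)) := by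
      rw [hτ]
      exact div_mul_cancel₀ _ (ne_of_gt hwi)
    rw [hτw] at hlt
    linarith
  have hwneg : ∃ i, w i < 0 := by
    by_contra hall
    push_neg at hall
    have : (0:ℝ) ≤ f (fun _ => (1:ℝ)) := by
      rw [hrep]
      exact Finset.sum_nonneg (fun i _ => by simpa using hall i)
    linarith
  have hcone : ∀ u : n → ℝ, (∀ i, 0 ≤ u i) → 0 ≤ f (N.mulVec u) := by
    intro u hu
    by_contra hneg
    push_neg at hneg
    set τ : ℝ := (|c| + 1) / (-(f (N.mulVec u))) with hτ
    have hτpos : 0 < τ := div_pos (by positivity) (by linarith)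
    have := hfc (N.mulVec (τ • u))
      ⟨τ • u, fun i => by
        have : (τ • u) i = τ * u i := rfl
        rw [this]; exact mul_nonneg (le_of_lt hτpos) (hu i), rfl⟩
    rw [Matrix.mulVec_smul] at this
    have h2 : f (τ • N.mulVec u) = τ * f (N.mulVec u) := by
      rw [f.map_smul, smul_eq_mul]
    rw [h2] at this
    have hdiv : f (N.mulVec u) / -f (N.mulVec u) = -1 := by
      rw [div_neg, div_self (ne_of_lt hneg)]
    have h3 : τ * f (N.mulVec u) = -(|c| + 1) := by
      calc τ * f (N.mulVec u)
          = (|c|+1) * (f (N.mulVec u) / -f (N.mulVec u)) := by rw [hτ]; ring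
        _ = -(|c|+1) := by rw [hdiv]; ring
    rw [h3] at this
    have : |c| < |c| := by
      calc |c| < |c| + 1 := by linarith
        _ ≤ -c := by linarith
        _ ≤ |c| := neg_le_abs c
    exact lt_irrefl _ this
  have hNTw : ∀ j, Nᵀ.mulVec (fun i => -(w i)) j ≤ 0 := by
    intro j
    have h1 := hcone (Pi.single j 1) (fun i => by
      by_cases h : j = i
      · subst h; simp
      · simp [Pi.single_apply, Ne.symm h, h])
    rw [hrep] at h1
    have h2 : ∀ i, N.mulVec (Pi.single j 1) i = N i j := by
      intro i
      simp [Matrix.mulVec_single]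
    have h3 : Nᵀ.mulVec (fun i => -(w i)) j = -(∑ i, N.mulVec (Pi.single j 1) i * w i) := by
      show ∑ i, Nᵀ j i * -(w i) = _
      rw [← Finset.sum_neg_distrib]
      refine Finset.sum_congr rfl (fun i _ => ?_)
      rw [h2 i]
      show N i j * -(w i) = -(N i j * w i)
      ring
    rw [h3]
    linarith
  obtain ⟨i1, hi1⟩ := hwneg
  have hqne : (fun i => -(w i)) ≠ 0 := by
    intro h
    have : -(w i1) = 0 := congrFun h i1
    linarith
  exact posMinors_no_sign_reversal (posMinors_transpose hN)
    (fun i => by simpa using hwle i) hqne hNTw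


lemma posMinors_conj {A : Matrix n n ℝ} (hA : PosMinors A)
    {σ : n → ℝ} (hσ : ∀ i, σ i = 1 ∨ σ i = -1) :
    PosMinors (Matrix.of (fun i j => σ i * A i j * σ j)) := by
  intro s
  have hsub : (Matrix.of (fun i j => σ i * A i j * σ j)).submatrix
        (fun i : s => (i : n)) (fun j : s => (j : n))
      = Matrix.diagonal (fun i : s => σ (i : n)) *
        (A.submatrix (fun i : s => (i : n)) (fun j : s => (j : n))) *
        Matrix.diagonal (fun j : s => σ (j : n)) := by
    ext i j
    simp [Matrix.mul_diagonal, Matrix.diagonal_mul, mul_assoc]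
  rw [hsub, Matrix.det_mul, Matrix.det_mul, Matrix.det_diagonal]
  have hprod : (∏ i : s, σ (i : n)) * (∏ i : s, σ (i : n)) = 1 := by
    rw [← Finset.prod_mul_distrib]
    exact Finset.prod_eq_one (fun i _ => by rcases hσ (i : n) with h | h <;> rw [h] <;> norm_num)
  have : (∏ i : s, σ (i : n)) *
        (A.submatrix (fun i : s => (i : n)) (fun j : s => (j : n))).det *
        (∏ i : s, σ (i : n))
      = ((∏ i : s, σ (i : n)) * (∏ i : s, σ (i : n))) *
        (A.submatrix (fun i : s => (i : n)) (fun j : s => (j : n))).det := by ring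
  rw [this, hprod, one_mul]
  exact hA s

end MatrixLemmas

section CalcHelpers

lemma eventually_lt_of_hasDerivWithinAt_neg {g : ℝ → ℝ} {c ε : ℝ} (hε : 0 < ε)
    (h : HasDerivWithinAt g c (Set.Icc 0 ε) 0) (hc : c < 0) :
    ∀ᶠ t in nhdsWithin 0 (Set.Ioc 0 ε), g t < g 0 := by
  have hset : Set.Icc (0:ℝ) ε \ {0} = Set.Ioc 0 ε := by
    ext t
    simp only [Set.mem_diff, Set.mem_Icc, Set.mem_singleton_iff, Set.mem_Ioc]
    constructor
    · rintro ⟨⟨h1, h2⟩, h3⟩; exact ⟨lt_of_le_of_ne h1 (Ne.symm h3), h2⟩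
    · rintro ⟨h1, h2⟩; exact ⟨⟨le_of_lt h1, h2⟩, ne_of_gt h1⟩
  have hslope := hasDerivWithinAt_iff_tendsto_slope.mp h
  rw [hset] at hslope
  have hev : ∀ᶠ t in nhdsWithin 0 (Set.Ioc 0 ε), slope g 0 t < 0 :=
    hslope.eventually_lt_const hc
  filter_upwards [hev, self_mem_nhdsWithin] with t hlt hm
  have ht0 : (0:ℝ) < t := hm.1
  have hs : slope g 0 t = (g t - g 0) / t := by
    rw [slope_def_field, sub_zero]
  rw [hs] at hlt
  have := (div_lt_iff₀ ht0).mp hlt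
  linarith

end CalcHelpers

section Master

open Filter Topology

lemma gn_master (m : ℕ) (I : Fin m → Set ℝ) (hIconn : ∀ i, (I i).OrdConnected)
    (F : (Fin m → ℝ) → (Fin m → ℝ)) (J : (Fin m → ℝ) → Matrix (Fin m) (Fin m) ℝ)
    (hF : ∀ θ ∈ Set.univ.pi I,
      HasFDerivWithinAt F (Matrix.toLin' (J θ)).toContinuousLinearMap (Set.univ.pi I) θ)
    (hP : ∀ θ ∈ Set.univ.pi I, PosMinors (J θ)) :
    ∀ S : Finset (Fin m), S.Nonempty → ∀ σ : Fin m → ℝ, (∀ i, σ i = 1 ∨ σ i = -1) →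
      ∀ x y : Fin m → ℝ, x ∈ Set.univ.pi I → y ∈ Set.univ.pi I →
      (∀ i, i ∉ S → x i = y i) → (∀ i ∈ S, 0 < σ i * (x i - y i)) →
      (∀ i ∈ S, σ i * (F x i - F y i) ≤ 0) → False := by
  classical
  intro S
  induction S using Finset.strongInduction with
  | _ S IH =>
  intro hSne σ hσ x y hx hy hoff hstrict hle
  have hσsq : ∀ i, σ i * σ i = 1 := fun i => by
    rcases hσ i with h | h <;> rw [h] <;> norm_num
  have hσne : ∀ i, σ i ≠ 0 := fun i => by
    rcases hσ i with h | h <;> rw [h] <;> norm_num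
  set Θ : Set (Fin m → ℝ) := Set.univ.pi I with hΘ
  set Krect : Fin m → Set ℝ :=
    fun i => if i ∈ S then Set.uIcc (y i) (x i) else {y i} with hKrect
  set K : Set (Fin m → ℝ) := Set.univ.pi Krect with hK
  have hKΘ : K ⊆ Θ := by
    intro z hz
    refine Set.mem_univ_pi.mpr (fun i => ?_)
    have hzi := Set.mem_univ_pi.mp hz i
    by_cases hiS : i ∈ S
    · simp only [hKrect, if_pos hiS] at hzi
      exact (hIconn i).uIcc_subset (Set.mem_univ_pi.mp hy i) (Set.mem_univ_pi.mp hx i) hzi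
    · simp only [hKrect, if_neg hiS, Set.mem_singleton_iff] at hzi
      rw [hzi]
      exact Set.mem_univ_pi.mp hy i
  have hKoff : ∀ z', z' ∈ K → ∀ i, i ∉ S → z' i = y i := by
    intro z' hz' i hiS
    have hzi := Set.mem_univ_pi.mp hz' i
    simpa only [hKrect, if_neg hiS, Set.mem_singleton_iff] using hzi
  have hKuIcc : ∀ z', z' ∈ K → ∀ i, i ∈ S → z' i ∈ Set.uIcc (y i) (x i) := by
    intro z' hz' i hiS
    have hzi := Set.mem_univ_pi.mp hz' i
    simpa only [hKrect, if_pos hiS] using hzi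
  have hKcompact : IsCompact K := by
    apply isCompact_univ_pi
    intro i
    by_cases hiS : i ∈ S
    · simp only [hKrect, if_pos hiS]; exact isCompact_uIcc
    · simp only [hKrect, if_neg hiS]; exact isCompact_singleton
  have hKclosed : IsClosed K := by
    apply isClosed_set_pi
    intro i _
    by_cases hiS : i ∈ S
    · simp only [hKrect, if_pos hiS]
      rcases le_total (y i) (x i) with h | h
      · rw [Set.uIcc_of_le h]; exact isClosed_Icc
      · rw [Set.uIcc_of_ge h]; exact isClosed_Icc
    · simp only [hKrect, if_neg hiS]; exact isClosed_singleton
  have hyK : y ∈ K := by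
    refine Set.mem_univ_pi.mpr (fun i => ?_)
    by_cases hiS : i ∈ S
    · simp only [hKrect, if_pos hiS]; exact Set.left_mem_uIcc
    · simp only [hKrect, if_neg hiS]; exact Set.mem_singleton _
  have hxK : x ∈ K := by
    refine Set.mem_univ_pi.mpr (fun i => ?_)
    by_cases hiS : i ∈ S
    · simp only [hKrect, if_pos hiS]; exact Set.right_mem_uIcc
    · simp only [hKrect, if_neg hiS, Set.mem_singleton_iff]; exact hoff i hiS
  have hFcontK : ContinuousOn F K := by
    intro z hz
    exact ((hF z (hKΘ hz)).continuousWithinAt).mono hKΘ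
  set φ : (Fin m → ℝ) → ℝ := fun z => ∑ i ∈ S, σ i * z i with hφ
  have hφcont : Continuous φ := by
    apply continuous_finset_sum
    exact fun i _ => continuous_const.mul (continuous_apply i)
  have hφsub : ∀ z, φ z - φ y = ∑ i ∈ S, σ i * (z i - y i) := by
    intro z
    simp only [hφ]
    rw [← Finset.sum_sub_distrib]
    exact Finset.sum_congr rfl (fun i _ => by ring)
  set Δ : ℝ := φ x - φ y with hΔ
  have hΔpos : 0 < Δ := by
    rw [hΔ, hφsub x]
    exact Finset.sum_pos hstrict hSne
  -- Claim A
  have claimA : ∀ z, z ∈ K → (∀ i ∈ S, σ i * (F z i - F y i) ≤ 0) → z ≠ y →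
      ∀ i ∈ S, 0 < σ i * (z i - y i) := by
    intro z hzK hzD hzy
    set T := S.filter (fun i => z i ≠ y i) with hT
    have hTsub : T ⊆ S := Finset.filter_subset _ _
    have hToff : ∀ i, i ∉ T → z i = y i := by
      intro i hiT
      by_cases hiS : i ∈ S
      · by_contra h
        exact hiT (Finset.mem_filter.mpr ⟨hiS, h⟩)
      · exact hKoff z hzK i hiS
    have hTne : T.Nonempty := by
      obtain ⟨i, hi⟩ := Function.ne_iff.mp hzy
      by_cases hiS : i ∈ S
      · exact ⟨i, Finset.mem_filter.mpr ⟨hiS, hi⟩⟩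
      · exact absurd (hKoff z hzK i hiS) hi
    have hTstrict : ∀ i ∈ T, 0 < σ i * (z i - y i) := by
      intro i hiT
      obtain ⟨hiS, hiz⟩ := Finset.mem_filter.mp hiT
      have hzi : z i ∈ Set.uIcc (y i) (x i) := hKuIcc z hzK i hiS
      have hxy := hstrict i hiS
      rcases hσ i with h1 | h1
      · rw [h1, one_mul] at hxy ⊢
        have hyx : y i ≤ x i := by linarith
        rw [Set.uIcc_of_le hyx] at hzi
        have h2 := hzi.1
        have h3 : y i < z i := lt_of_le_of_ne h2 (Ne.symm hiz)
        linarith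
      · rw [h1] at hxy ⊢
        have hxiy : x i ≤ y i := by linarith
        rw [Set.uIcc_of_ge hxiy] at hzi
        have h2 := hzi.2
        have h3 : z i < y i := lt_of_le_of_ne h2 hiz
        linarith
    by_cases hTS : T = S
    · intro i hiS
      exact hTstrict i (by rw [hTS]; exact hiS)
    · exfalso
      exact IH T (Finset.ssubset_iff_subset_ne.mpr ⟨hTsub, hTS⟩) hTne σ hσ z y
        (hKΘ hzK) hy hToff hTstrict (fun i hiT => hzD i (hTsub hiT))
  -- Claim C
  have claimC : ∀ δ : ℝ, 0 < δ → δ ≤ Δ →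
      ∃ z, z ∈ K ∧ (∀ i ∈ S, σ i * (F z i - F y i) ≤ 0) ∧ φ z - φ y = δ := by
    intro δ hδpos hδle
    set D : Set (Fin m → ℝ) :=
      {z | z ∈ K ∧ (∀ i ∈ S, σ i * (F z i - F y i) ≤ 0) ∧ φ y + δ ≤ φ z} with hD
    have hDsubK : D ⊆ K := fun z hz => hz.1
    have hDclosed : IsClosed D := by
      have heq : D = (⋂ i ∈ S, (K ∩ (fun z => σ i * (F z i - F y i)) ⁻¹' Set.Iic 0)) ∩
          (K ∩ φ ⁻¹' Set.Ici (φ y + δ)) := by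
        ext z
        simp only [hD, Set.mem_setOf_eq, Set.mem_inter_iff, Set.mem_iInter, Set.mem_preimage,
          Set.mem_Iic, Set.mem_Ici]
        constructor
        · rintro ⟨h1, h2, h3⟩
          exact ⟨fun i hi => ⟨h1, h2 i hi⟩, h1, h3⟩
        · rintro ⟨hA, hzK, hφ'⟩
          exact ⟨hzK, fun i hi => (hA i hi).2, hφ'⟩
      rw [heq]
      refine IsClosed.inter (isClosed_biInter (fun i hi => ?_))
        (ContinuousOn.preimage_isClosed_of_isClosed hφcont.continuousOn hKclosed isClosed_Ici)
      refine ContinuousOn.preimage_isClosed_of_isClosed ?_ hKclosed isClosed_Iic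
      exact continuousOn_const.mul
        ((((continuous_apply i).comp_continuousOn hFcontK)).sub continuousOn_const)
    have hDcomp : IsCompact D := hKcompact.of_isClosed_subset hDclosed hDsubK
    have hxD : x ∈ D := ⟨hxK, hle, by rw [hΔ] at hδle; linarith⟩
    obtain ⟨z₀, hz₀D, hz₀min⟩ := hDcomp.exists_isMinOn ⟨x, hxD⟩ hφcont.continuousOn
    obtain ⟨hz₀K, hz₀D2, hz₀φ⟩ := hz₀D
    by_cases hcase : φ z₀ ≤ φ y + δ
    · exact ⟨z₀, hz₀K, hz₀D2, by linarith⟩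
    push_neg at hcase
    exfalso
    have hz₀y : z₀ ≠ y := by
      intro h
      rw [h] at hcase; linarith
    have hstrict₀ : ∀ i ∈ S, 0 < σ i * (z₀ i - y i) := claimA z₀ hz₀K hz₀D2 hz₀y
    set A : Finset (Fin m) := S.filter (fun i => σ i * (F z₀ i - F y i) = 0) with hA
    have hAS : A ⊆ S := Finset.filter_subset _ _
    set M : Matrix (Fin m) (Fin m) ℝ := Matrix.of (fun i j => σ i * J z₀ i j * σ j) with hM
    have hMpos : PosMinors M := posMinors_conj (hP z₀ (hKΘ hz₀K)) hσ
    obtain ⟨u, hu0, husupp, hMu, husum⟩ :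
        ∃ u : Fin m → ℝ, (∀ i, 0 ≤ u i) ∧ (∀ i, i ∉ S → u i = 0) ∧
          (∀ i ∈ A, 0 < M.mulVec u i) ∧ 0 < ∑ i ∈ S, u i := by
      by_cases hAne : A.Nonempty
      · obtain ⟨u₀, hu₀0, hu₀pos⟩ :=
          posMinors_exists_pos_mulVec (posMinors_submatrix hMpos A)
        set u : Fin m → ℝ := fun i => if h : i ∈ A then u₀ ⟨i, h⟩ else 0 with hu
        have hu0 : ∀ i, 0 ≤ u i := by
          intro i
          simp only [hu]
          split
          · exact hu₀0 _
          · exact le_refl 0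
        have husuppA : ∀ i, i ∉ A → u i = 0 := by
          intro i hi
          simp only [hu, dif_neg hi]
        have hu₀u : ∀ j : A, u₀ j = u (j : Fin m) := by
          intro j
          simp only [hu, dif_pos j.2]
        have hMvec : ∀ i, ∀ hi : i ∈ A,
            (M.submatrix (fun a : A => (a : Fin m)) (fun a : A => (a : Fin m))).mulVec u₀ ⟨i, hi⟩
              = M.mulVec u i := by
          intro i hi
          show ∑ j : A, M i (j : Fin m) * u₀ j = ∑ j, M i j * u j
          rw [Finset.sum_congr rfl (fun j _ => by rw [hu₀u j])]
          rw [Finset.sum_coe_sort A (fun j => M i j * u j)]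
          exact Finset.sum_subset (Finset.subset_univ A)
            (fun j _ hj => by rw [husuppA j hj, mul_zero])
        have hune : ∃ j : A, 0 < u₀ j := by
          by_contra hcon
          push_neg at hcon
          have hzero : u₀ = 0 := funext (fun j => le_antisymm (hcon j) (hu₀0 j))
          obtain ⟨i0, hi0⟩ := hAne
          have hpos := hu₀pos ⟨i0, hi0⟩
          rw [hzero, Matrix.mulVec_zero] at hpos
          exact lt_irrefl 0 (by simpa using hpos)
        obtain ⟨j, hj⟩ := hune
        refine ⟨u, hu0, (fun i hi => husuppA i (fun hiA => hi (hAS hiA))), ?_, ?_⟩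
        · intro i hi
          rw [← hMvec i hi]
          exact hu₀pos ⟨i, hi⟩
        · calc (0:ℝ) < u₀ j := hj
            _ = u (j : Fin m) := hu₀u j
            _ ≤ ∑ i ∈ S, u i := Finset.single_le_sum (fun i _ => hu0 i) (hAS j.2)
      · refine ⟨fun i => if i ∈ S then 1 else 0, ?_, ?_, ?_, ?_⟩
        · intro i; dsimp only; split <;> norm_num
        · intro i hi; dsimp only; rw [if_neg hi]
        · intro i hi; exact absurd ⟨i, hi⟩ hAne
        · have hsum : ∑ i ∈ S, (if i ∈ S then (1:ℝ) else 0) = ∑ _i ∈ S, (1:ℝ) :=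
            Finset.sum_congr rfl (fun i hi => if_pos hi)
          dsimp only
          rw [hsum, Finset.sum_const, nsmul_eq_mul, mul_one]
          exact_mod_cast Finset.card_pos.mpr hSne
    set d : Fin m → ℝ := fun i => -(σ i * u i) with hd
    set ε : ℝ := S.inf' hSne (fun i => (σ i * (z₀ i - y i)) / (u i + 1)) with hε
    have hεpos : 0 < ε := by
      rw [hε, Finset.lt_inf'_iff]
      intro i hi
      exact div_pos (hstrict₀ i hi) (by have := hu0 i; linarith)
    have hεle : ∀ i ∈ S, ∀ t : ℝ, 0 ≤ t → t ≤ ε → t * u i ≤ σ i * (z₀ i - y i) := by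
      intro i hi t ht0 htε
      have h1 : ε ≤ (σ i * (z₀ i - y i)) / (u i + 1) := Finset.inf'_le _ hi
      have h2 : 0 ≤ u i := hu0 i
      have h4 : (σ i * (z₀ i - y i)) / (u i + 1) * (u i + 1) = σ i * (z₀ i - y i) :=
        div_mul_cancel₀ _ (by linarith)
      have h5 : t * (u i + 1) ≤ ε * (u i + 1) :=
        mul_le_mul_of_nonneg_right htε (by linarith)
      have h6 : ε * (u i + 1) ≤ (σ i * (z₀ i - y i)) / (u i + 1) * (u i + 1) :=
        mul_le_mul_of_nonneg_right h1 (by linarith)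
      nlinarith
    set γ : ℝ → (Fin m → ℝ) := fun t => z₀ + t • d with hγ
    have hγ0 : γ 0 = z₀ := by simp [hγ]
    have hγi : ∀ t : ℝ, ∀ i, γ t i = z₀ i + t * d i := by
      intro t i
      simp [hγ, Pi.smul_apply, smul_eq_mul]
    have hmapsK : Set.MapsTo γ (Set.Icc 0 ε) K := by
      intro t ht
      refine Set.mem_univ_pi.mpr (fun i => ?_)
      by_cases hiS : i ∈ S
      · simp only [hKrect, if_pos hiS]
        have hzi : z₀ i ∈ Set.uIcc (y i) (x i) := hKuIcc z₀ hz₀K i hiS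
        have hb := hεle i hiS t ht.1 ht.2
        have hstr := hstrict₀ i hiS
        have hxyi := hstrict i hiS
        have htu : 0 ≤ t * u i := mul_nonneg ht.1 (hu0 i)
        rw [hγi]
        rcases hσ i with h1 | h1
        · rw [h1, one_mul] at hb hstr hxyi
          have hyx : y i ≤ x i := by linarith
          rw [Set.uIcc_of_le hyx] at hzi ⊢
          have hdi : d i = -u i := by simp only [hd, h1, one_mul]
          rw [hdi]
          have hrw : z₀ i + t * -u i = z₀ i - t * u i := by ring
          rw [hrw]
          constructor
          · linarith
          · have := hzi.2; linarith
        · rw [h1] at hb hstr hxyi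
          have hxiy : x i ≤ y i := by linarith
          rw [Set.uIcc_of_ge hxiy] at hzi ⊢
          have hdi : d i = u i := by simp only [hd, h1]; ring
          rw [hdi]
          have hb' : t * u i ≤ y i - z₀ i := by linarith
          constructor
          · have := hzi.1; linarith
          · linarith
      · simp only [hKrect, if_neg hiS, Set.mem_singleton_iff]
        have hdi : d i = 0 := by simp only [hd, husupp i hiS]; ring
        rw [hγi, hdi, mul_zero, add_zero]
        exact hKoff z₀ hz₀K i hiS
    have hγΘ : Set.MapsTo γ (Set.Icc 0 ε) Θ := fun t ht => hKΘ (hmapsK ht)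
    have hγderiv : HasDerivWithinAt γ d (Set.Icc 0 ε) 0 := by
      have h1 : HasDerivAt (fun t : ℝ => z₀ + t • d) ((1:ℝ) • d) 0 :=
        ((hasDerivAt_id (0:ℝ)).smul_const d).const_add z₀
      rw [one_smul] at h1
      exact h1.hasDerivWithinAt
    have hcomp : HasDerivWithinAt (F ∘ γ)
        ((Matrix.toLin' (J z₀)).toContinuousLinearMap d) (Set.Icc 0 ε) 0 := by
      refine HasFDerivWithinAt.comp_hasDerivWithinAt 0 ?_ hγderiv hγΘ
      rw [hγ0]
      exact hF z₀ (hKΘ hz₀K)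
    have hgideriv : ∀ i, HasDerivWithinAt (fun t => σ i * (F (γ t) i - F y i))
        (σ i * ((J z₀).mulVec d i)) (Set.Icc 0 ε) 0 := by
      intro i
      have h1 : HasDerivWithinAt (fun t => (F ∘ γ) t i)
          ((Matrix.toLin' (J z₀)).toContinuousLinearMap d i) (Set.Icc 0 ε) 0 :=
        (ContinuousLinearMap.proj (R := ℝ) (φ := fun _ : Fin m => ℝ)
          i).hasFDerivAt.comp_hasDerivWithinAt 0 hcomp
      have h2 : (Matrix.toLin' (J z₀)).toContinuousLinearMap d i = (J z₀).mulVec d i := by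
        simp [Matrix.toLin'_apply]
      rw [h2] at h1
      exact (h1.sub_const (F y i)).const_mul (σ i)
    have hderivval : ∀ i, σ i * ((J z₀).mulVec d i) = -(M.mulVec u i) := by
      intro i
      show σ i * (∑ j, J z₀ i j * d j) = -(∑ j, M i j * u j)
      rw [Finset.mul_sum, ← Finset.sum_neg_distrib]
      refine Finset.sum_congr rfl (fun j _ => ?_)
      simp only [hd, hM, Matrix.of_apply]
      ring
    haveI hNeBot : (nhdsWithin (0:ℝ) (Set.Ioc 0 ε)).NeBot := by
      rw [nhdsWithin_Ioc_eq_nhdsGT hεpos]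
      exact nhdsGT_neBot 0
    have hIocIcc : Set.Ioc (0:ℝ) ε ⊆ Set.Icc 0 ε := Set.Ioc_subset_Icc_self
    have hevF : ∀ᶠ t in nhdsWithin 0 (Set.Ioc 0 ε),
        ∀ i ∈ S, σ i * (F (γ t) i - F y i) ≤ 0 := by
      rw [Finset.eventually_all]
      intro i hiS
      by_cases hiA : i ∈ A
      · have hneg : σ i * ((J z₀).mulVec d i) < 0 := by
          rw [hderivval i]
          exact neg_lt_zero.mpr (hMu i hiA)
        have hev := eventually_lt_of_hasDerivWithinAt_neg hεpos (hgideriv i) hneg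
        have hval0 : σ i * (F (γ 0) i - F y i) = 0 := by
          rw [hγ0]
          exact (Finset.mem_filter.mp hiA).2
        filter_upwards [hev] with t ht
        exact le_of_lt (lt_of_lt_of_eq ht hval0)
      · have hlt : σ i * (F (γ 0) i - F y i) < 0 := by
          rw [hγ0]
          refine lt_of_le_of_ne (hz₀D2 i hiS) ?_
          intro h
          exact hiA (Finset.mem_filter.mpr ⟨hiS, h⟩)
        have hcont : ContinuousWithinAt (fun t => σ i * (F (γ t) i - F y i))
            (Set.Icc 0 ε) 0 := (hgideriv i).continuousWithinAt
        have hev : ∀ᶠ t in nhdsWithin 0 (Set.Icc 0 ε), σ i * (F (γ t) i - F y i) < 0 :=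
          Filter.Tendsto.eventually_lt_const hlt hcont
        exact (hev.filter_mono (nhdsWithin_mono 0 hIocIcc)).mono (fun t ht => le_of_lt ht)
    have hφγ : ∀ t : ℝ, φ (γ t) = φ z₀ - t * ∑ i ∈ S, u i := by
      intro t
      simp only [hφ]
      have hterm : ∀ i ∈ S, σ i * γ t i = σ i * z₀ i - t * u i := by
        intro i hi
        rw [hγi]
        simp only [hd]
        calc σ i * (z₀ i + t * -(σ i * u i))
            = σ i * z₀ i - t * ((σ i * σ i) * u i) := by ring
          _ = σ i * z₀ i - t * u i := by rw [hσsq i, one_mul]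
      rw [Finset.sum_congr rfl hterm, Finset.sum_sub_distrib, ← Finset.mul_sum]
    have hevφ : ∀ᶠ t in nhdsWithin 0 (Set.Ioc 0 ε), φ y + δ ≤ φ (γ t) := by
      have ht₁pos : 0 < (φ z₀ - (φ y + δ)) / (∑ i ∈ S, u i) := div_pos (by linarith) husum
      have hsmall : ∀ᶠ t in 𝓝 (0:ℝ), t < (φ z₀ - (φ y + δ)) / (∑ i ∈ S, u i) :=
        Filter.eventually_of_mem (Iio_mem_nhds ht₁pos) (fun t ht => ht)
      filter_upwards [hsmall.filter_mono nhdsWithin_le_nhds, self_mem_nhdsWithin] with t hts htm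
      rw [hφγ t]
      have h2 : t * ∑ i ∈ S, u i < φ z₀ - (φ y + δ) := by
        have h3 := mul_lt_mul_of_pos_right hts husum
        rwa [div_mul_cancel₀ _ (ne_of_gt husum)] at h3
      linarith
    have hevdec : ∀ᶠ t in nhdsWithin 0 (Set.Ioc 0 ε), φ (γ t) < φ z₀ := by
      filter_upwards [self_mem_nhdsWithin] with t htm
      rw [hφγ t]
      have h3 : 0 < t * ∑ i ∈ S, u i := mul_pos htm.1 husum
      linarith
    obtain ⟨t, ht1, ht2, ht3, ht4⟩ :=
      (hevF.and (hevφ.and (hevdec.and self_mem_nhdsWithin))).exists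
    have hmemD : γ t ∈ D := ⟨hmapsK (hIocIcc ht4), ht1, ht2⟩
    have := isMinOn_iff.mp hz₀min (γ t) hmemD
    linarith
  -- limit argument
  set δseq : ℕ → ℝ := fun n => Δ / (n + 1) with hδseq
  have hδpos : ∀ n, 0 < δseq n := fun n => div_pos hΔpos (by positivity)
  have hδleΔ : ∀ n, δseq n ≤ Δ := by
    intro n
    rw [hδseq]
    rw [div_le_iff₀ (by positivity)]
    nlinarith [hΔpos, (show (0:ℝ) ≤ (n:ℝ) by positivity)]
  choose z hzK hzD hzφ using fun n => claimC (δseq n) (hδpos n) (hδleΔ n)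
  have hzney : ∀ n, z n ≠ y := by
    intro n h
    have h1 := hzφ n
    rw [h, sub_self] at h1
    exact (ne_of_gt (hδpos n)) h1.symm
  have hzstr : ∀ n, ∀ i ∈ S, 0 < σ i * (z n i - y i) :=
    fun n => claimA (z n) (hzK n) (hzD n) (hzney n)
  have hcoord : ∀ n, ∀ i ∈ S, σ i * (z n i - y i) ≤ δseq n := by
    intro n i hi
    rw [← hzφ n, hφsub (z n)]
    exact Finset.single_le_sum (fun j hj => le_of_lt (hzstr n j hj)) hi
  have habs : ∀ n i, |z n i - y i| ≤ δseq n := by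
    intro n i
    by_cases hiS : i ∈ S
    · have h1 := hzstr n i hiS
      have h2 := hcoord n i hiS
      rcases hσ i with h | h
      · rw [h, one_mul] at h1 h2
        rw [abs_of_pos h1]
        exact h2
      · rw [h] at h1 h2
        rw [abs_of_neg (by linarith)]
        linarith
    · rw [hKoff (z n) (hzK n) i hiS, sub_self, abs_zero]
      exact le_of_lt (hδpos n)
  have hδ0 : Filter.Tendsto δseq Filter.atTop (𝓝 0) := by
    have h1 : δseq = fun n : ℕ => Δ * (1 / ((n:ℝ) + 1)) := by
      funext n; rw [hδseq]; ring
    rw [h1]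
    have h2 := tendsto_one_div_add_atTop_nhds_zero_nat.const_mul Δ
    simpa using h2
  have hzy : Filter.Tendsto z Filter.atTop (𝓝 y) := by
    rw [tendsto_pi_nhds]
    intro i
    have h1 : Filter.Tendsto (fun n => z n i - y i) Filter.atTop (𝓝 0) :=
      squeeze_zero_norm (fun n => habs n i) hδ0
    have h2 := h1.add_const (y i)
    simpa using h2
  have hzyK : Filter.Tendsto z Filter.atTop (nhdsWithin y K) :=
    tendsto_nhdsWithin_iff.mpr ⟨hzy, Filter.Eventually.of_forall hzK⟩
  set L := (Matrix.toLin' (J y)).toContinuousLinearMap with hL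
  have hlittleo : (fun n => F (z n) - F y - L (z n - y)) =o[Filter.atTop]
      (fun n => z n - y) := by
    have h1 : (fun x' => F x' - F y - L (x' - y)) =o[nhdsWithin y K] (fun x' => x' - y) :=
      HasFDerivWithinAt.isLittleO ((hF y hy).mono hKΘ)
    exact h1.comp_tendsto hzyK
  have hwnorm : ∀ n, ‖z n - y‖ ≠ 0 := by
    intro n h
    exact hzney n (sub_eq_zero.mp (norm_eq_zero.mp h))
  set e : ℕ → ℝ := fun n => ‖F (z n) - F y - L (z n - y)‖ / ‖z n - y‖ with he
  have he0 : Filter.Tendsto e Filter.atTop (𝓝 0) := by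
    have h2 := hlittleo.norm_norm
    rw [Asymptotics.isLittleO_iff_tendsto (fun n h => absurd h (hwnorm n))] at h2
    exact h2
  set v : ℕ → (Fin m → ℝ) := fun n => ‖z n - y‖⁻¹ • (z n - y) with hv
  have hvsph : ∀ n, v n ∈ Metric.sphere (0 : Fin m → ℝ) 1 := by
    intro n
    rw [mem_sphere_zero_iff_norm]
    simp only [hv]
    rw [norm_smul, norm_inv, norm_norm, inv_mul_cancel₀ (hwnorm n)]
  obtain ⟨vl, hvlsph, ψ, hψ, hψtend⟩ :=
    (isCompact_sphere (0 : Fin m → ℝ) 1).tendsto_subseq hvsph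
  have hvl1 : ‖vl‖ = 1 := mem_sphere_zero_iff_norm.mp hvlsph
  have hvcoord : ∀ i, Filter.Tendsto (fun k => v (ψ k) i) Filter.atTop (𝓝 (vl i)) :=
    fun i => (tendsto_pi_nhds.mp hψtend) i
  have hvloff : ∀ i, i ∉ S → vl i = 0 := by
    intro i hiS
    have hzero : ∀ k, v (ψ k) i = 0 := by
      intro k
      simp only [hv, Pi.smul_apply, Pi.sub_apply]
      rw [hKoff (z (ψ k)) (hzK (ψ k)) i hiS, sub_self, smul_zero]
    have h1 := hvcoord i
    have h2 : (fun k => v (ψ k) i) = fun _ => (0:ℝ) := funext hzero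
    rw [h2] at h1
    exact tendsto_nhds_unique h1 tendsto_const_nhds
  have hvlsgn : ∀ i ∈ S, 0 ≤ σ i * vl i := by
    intro i hi
    have hterm : ∀ k, 0 ≤ σ i * v (ψ k) i := by
      intro k
      simp only [hv, Pi.smul_apply, Pi.sub_apply, smul_eq_mul]
      have h1 : 0 ≤ ‖z (ψ k) - y‖⁻¹ := inv_nonneg.mpr (norm_nonneg _)
      have h2 : 0 ≤ σ i * (z (ψ k) i - y i) := le_of_lt (hzstr (ψ k) i hi)
      calc (0:ℝ) ≤ ‖z (ψ k) - y‖⁻¹ * (σ i * (z (ψ k) i - y i)) := mul_nonneg h1 h2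
        _ = σ i * (‖z (ψ k) - y‖⁻¹ * (z (ψ k) i - y i)) := by ring
    exact ge_of_tendsto ((hvcoord i).const_mul (σ i)) (Filter.Eventually.of_forall hterm)
  have hvlL : ∀ i ∈ S, σ i * ((J y).mulVec vl i) ≤ 0 := by
    intro i hi
    have hLvl : Filter.Tendsto (fun k => σ i * L (v (ψ k)) i) Filter.atTop
        (𝓝 (σ i * L vl i)) := by
      have h1 : Filter.Tendsto (fun k => L (v (ψ k))) Filter.atTop (𝓝 (L vl)) :=
        (L.continuous.tendsto vl).comp hψtend
      exact ((tendsto_pi_nhds.mp h1) i).const_mul (σ i)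
    have hbound : ∀ k, σ i * L (v (ψ k)) i ≤ e (ψ k) := by
      intro k
      have h1 : L (v (ψ k)) = ‖z (ψ k) - y‖⁻¹ • L (z (ψ k) - y) := by
        simp only [hv]
        rw [ContinuousLinearMap.map_smul]
      have hD := hzD (ψ k) i hi
      have h3 : σ i * L (z (ψ k) - y) i
          = σ i * (F (z (ψ k)) i - F y i)
            - σ i * ((F (z (ψ k)) - F y - L (z (ψ k) - y)) i) := by
        simp only [Pi.sub_apply]
        ring
      have h5 : |(F (z (ψ k)) - F y - L (z (ψ k) - y)) i|
          ≤ ‖F (z (ψ k)) - F y - L (z (ψ k) - y)‖ := by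
        rw [← Real.norm_eq_abs]
        exact norm_le_pi_norm _ i
      have h6 : -(σ i * ((F (z (ψ k)) - F y - L (z (ψ k) - y)) i))
          ≤ |(F (z (ψ k)) - F y - L (z (ψ k) - y)) i| := by
        rcases hσ i with h | h
        · rw [h, one_mul]
          exact neg_le_abs _
        · rw [h]
          have hrw : -(-1 * ((F (z (ψ k)) - F y - L (z (ψ k) - y)) i))
              = (F (z (ψ k)) - F y - L (z (ψ k) - y)) i := by ring
          rw [hrw]
          exact le_abs_self _
      have h2 : σ i * L (z (ψ k) - y) i ≤ ‖F (z (ψ k)) - F y - L (z (ψ k) - y)‖ := by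
        rw [h3]
        linarith
      rw [h1, Pi.smul_apply, smul_eq_mul]
      have h7 : σ i * (‖z (ψ k) - y‖⁻¹ * L (z (ψ k) - y) i)
          = ‖z (ψ k) - y‖⁻¹ * (σ i * L (z (ψ k) - y) i) := by ring
      rw [h7]
      have h8 := mul_le_mul_of_nonneg_left h2 (inv_nonneg.mpr (norm_nonneg (z (ψ k) - y)))
      simp only [he]
      rw [div_eq_inv_mul]
      exact h8
    have hle0 : σ i * L vl i ≤ 0 :=
      le_of_tendsto_of_tendsto' hLvl (he0.comp hψ.tendsto_atTop) hbound
    have h9 : L vl = (J y).mulVec vl := by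
      simp [hL, Matrix.toLin'_apply]
    rw [h9] at hle0
    exact hle0
  set My : Matrix (Fin m) (Fin m) ℝ := Matrix.of (fun i j => σ i * J y i j * σ j) with hMy
  have hMypos : PosMinors My := posMinors_conj (hP y hy) hσ
  set ul : Fin m → ℝ := fun i => σ i * vl i with hul
  have hulS : ∀ i, i ∉ S → ul i = 0 := by
    intro i hi
    simp only [hul]
    rw [hvloff i hi, mul_zero]
  have hMyul : ∀ i ∈ S, My.mulVec ul i ≤ 0 := by
    intro i hi
    have h1 : My.mulVec ul i = σ i * ((J y).mulVec vl i) := by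
      show ∑ j, My i j * ul j = σ i * ∑ j, J y i j * vl j
      rw [Finset.mul_sum]
      refine Finset.sum_congr rfl (fun j _ => ?_)
      simp only [hMy, hul, Matrix.of_apply]
      calc σ i * J y i j * σ j * (σ j * vl j)
          = σ i * (J y i j * vl j) * (σ j * σ j) := by ring
        _ = σ i * (J y i j * vl j) := by rw [hσsq j, mul_one]
    rw [h1]
    exact hvlL i hi
  have hNSpos : PosMinors (My.submatrix (fun i : S => (i : Fin m)) (fun j : S => (j : Fin m))) :=
    posMinors_submatrix hMypos S
  set q : S → ℝ := fun i => ul (i : Fin m) with hq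
  have hq0 : ∀ i : S, 0 ≤ q i := fun i => hvlsgn (i : Fin m) i.2
  have hqne : q ≠ 0 := by
    have hvlne : ∃ i, vl i ≠ 0 := by
      by_contra hcon
      push_neg at hcon
      have h1 : vl = 0 := funext hcon
      rw [h1, norm_zero] at hvl1
      norm_num at hvl1
    obtain ⟨i, hi⟩ := hvlne
    have hiS : i ∈ S := by
      by_contra h
      exact hi (hvloff i h)
    intro h
    have h2 : σ i * vl i = 0 := congrFun h ⟨i, hiS⟩
    rcases mul_eq_zero.mp h2 with h3 | h3
    · exact hσne i h3
    · exact hi h3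
  have hqvec : ∀ i : S,
      (My.submatrix (fun i : S => (i : Fin m)) (fun j : S => (j : Fin m))).mulVec q i ≤ 0 := by
    intro i
    have h1 : (My.submatrix (fun i : S => (i : Fin m)) (fun j : S => (j : Fin m))).mulVec q i
        = My.mulVec ul (i : Fin m) := by
      show ∑ j : S, My (i : Fin m) (j : Fin m) * ul (j : Fin m) = ∑ j, My (i : Fin m) j * ul j
      rw [Finset.sum_coe_sort S (fun j => My (i : Fin m) j * ul j)]
      exact Finset.sum_subset (Finset.subset_univ S)
        (fun j _ hj => by rw [hulS j hj, mul_zero])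
    rw [h1]
    exact hMyul (i : Fin m) i.2
  exact posMinors_no_sign_reversal hNSpos hq0 hqne hqvec

end Master

/-- Gale–Nikaido: a C¹ map on a closed rectangle whose Jacobian is everywhere a
P-matrix is injective. -/
theorem gale_nikaido_injective (m : ℕ)
    (I : Fin m → Set ℝ) (hIc : ∀ i, IsClosed (I i)) (hIconn : ∀ i, (I i).OrdConnected)
    (F : (Fin m → ℝ) → (Fin m → ℝ)) (J : (Fin m → ℝ) → Matrix (Fin m) (Fin m) ℝ)
    (hF : ∀ θ ∈ Set.univ.pi I,
      HasFDerivWithinAt F (Matrix.toLin' (J θ)).toContinuousLinearMap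
        (Set.univ.pi I) θ)
    (hFcont : ContinuousOn (fun θ => J θ) (Set.univ.pi I))
    (hP : ∀ θ ∈ Set.univ.pi I, ∀ s : Finset (Fin m), s.Nonempty →
      0 < ((J θ).submatrix (fun i : s => (i : Fin m)) (fun j : s => (j : Fin m))).det) :
    Set.InjOn F (Set.univ.pi I) := by
  classical
  intro a ha b hb hab
  by_contra hne
  have hP' : ∀ θ ∈ Set.univ.pi I, PosMinors (J θ) := by
    intro θ hθ s
    rcases s.eq_empty_or_nonempty with h | h
    · subst h
      haveI : IsEmpty {x : Fin m // x ∈ (∅ : Finset (Fin m))} :=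
        ⟨fun x => Finset.notMem_empty _ x.2⟩
      rw [Matrix.det_isEmpty]
      norm_num
    · exact hP θ hθ s h
  set S : Finset (Fin m) := Finset.univ.filter (fun i => a i ≠ b i) with hS
  have hSne : S.Nonempty := by
    obtain ⟨i, hi⟩ := Function.ne_iff.mp hne
    exact ⟨i, Finset.mem_filter.mpr ⟨Finset.mem_univ _, hi⟩⟩
  set σ : Fin m → ℝ := fun i => if b i < a i then 1 else -1 with hσdef
  have hσ : ∀ i, σ i = 1 ∨ σ i = -1 := by
    intro i
    simp only [hσdef]
    split
    · exact Or.inl rfl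
    · exact Or.inr rfl
  refine gn_master m I hIconn F J hF hP' S hSne σ hσ a b ha hb ?_ ?_ ?_
  · intro i hi
    by_contra h
    exact hi (Finset.mem_filter.mpr ⟨Finset.mem_univ _, h⟩)
  · intro i hi
    have hne_i := (Finset.mem_filter.mp hi).2
    simp only [hσdef]
    split
    · rename_i hlt
      rw [one_mul]
      linarith
    · rename_i hnlt
      push_neg at hnlt
      have h1 : a i < b i := lt_of_le_of_ne hnlt hne_i
      have h2 : a i - b i < 0 := by linarith
      linarith [neg_one_mul (a i - b i)]
  · intro i _
    rw [hab, sub_self, mul_zero]
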